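/- Let E be a directed graph and suppose there is exactly one closed simple path λ = e₁⋯eₙ based at a vertex v. Then for each i = 1,…,n, there is exactly one closed simple path based at s(e_i), namely the rotation λ_i = e_i⋯eₙe₁⋯e_{i−1}, and λ_i is a cycle. -/

import Mathlib

/-- A path in a directed graph with edge set `E`, vertex set `V` and
source/range maps `s r : E → V` is a list of edges in which consecutive edges
are composable. -/
def IsGraphPath {V E : Type*} (s r : E → V) (es : List E) : Prop :=
  es.Chain' fun e f => r e = s f

/-- A closed path based at `v`: a nonempty path starting and ending at `v`. -/
structure IsClosedPath {V E : Type*} (s r : E → V) (v : V) (es : List E) : Prop where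
  ne : es ≠ []
  path : IsGraphPath s r es
  src : ∀ h : es ≠ [], s (es.head h) = v
  rng : ∀ h : es ≠ [], r (es.getLast h) = v

/-- A closed simple path based at `v`: a closed path `e₁⋯eₙ` based at `v` such
that `s eᵢ ≠ v` for `i = 2, …, n`. -/
def IsClosedSimplePath {V E : Type*} (s r : E → V) (v : V) (es : List E) : Prop :=
  IsClosedPath s r v es ∧ ∀ i (h : i < es.length), 0 < i → s es[i] ≠ v

/-- A cycle based at `v`: a closed simple path all of whose source vertices are
pairwise distinct. -/
def IsCycle {V E : Type*} (s r : E → V) (v : V) (es : List E) : Prop :=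
  IsClosedSimplePath s r v es ∧
    ∀ i j (hi : i < es.length) (hj : j < es.length), s es[i] = s es[j] → i = j

section Aux

variable {V E : Type*} {s r : E → V} {v : V}

lemma gE {α : Type*} {L : List α} {i j : ℕ} (h : i = j) {hi : i < L.length} :
    L[i] = L[j]'(h ▸ hi) := by subst h; rfl

lemma isGraphPath_iff {p : List E} :
    IsGraphPath s r p ↔ ∀ j (h : j + 1 < p.length), r p[j] = s p[j + 1] := by
  unfold IsGraphPath
  show List.IsChain _ p ↔ _
  refine List.isChain_iff_getElem.trans ?_
  constructor
  · intro h j hj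
    simpa using h j (by omega)
  · intro h j hj
    simpa using h j (by omega)

lemma IsClosedPath.src' {p : List E} (h : IsClosedPath s r v p) (h0 : 0 < p.length) :
    s p[0] = v := by
  have hne : p ≠ [] := List.length_pos_iff.mp h0
  have := h.src hne
  rwa [List.head_eq_getElem] at this

lemma IsClosedPath.rng' {p : List E} (h : IsClosedPath s r v p) (h0 : 0 < p.length) :
    r p[p.length - 1] = v := by
  have hne : p ≠ [] := List.length_pos_iff.mp h0
  have := h.rng hne
  rwa [List.getLast_eq_getElem] at this

lemma IsClosedPath.mk' {p : List E} (h0 : 0 < p.length)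
    (hchain : ∀ j (h : j + 1 < p.length), r p[j] = s p[j + 1])
    (hsrc : s p[0] = v) (hrng : r p[p.length - 1] = v) :
    IsClosedPath s r v p := by
  have hne : p ≠ [] := List.length_pos_iff.mp h0
  refine ⟨hne, isGraphPath_iff.mpr hchain, ?_, ?_⟩
  · intro h; rwa [List.head_eq_getElem]
  · intro h; rwa [List.getLast_eq_getElem]

variable {l : List E}

/-- The sources along the unique closed simple path are pairwise distinct. -/
lemma srcInj (hl : IsClosedSimplePath s r v l)
    (huniq : ∀ m : List E, IsClosedSimplePath s r v m → m = l) :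
    ∀ a b (ha : a < l.length) (hb : b < l.length), s l[a] = s l[b] → a = b := by
  have key : ∀ a b (ha : a < l.length) (hb : b < l.length), a < b → s l[a] = s l[b] → False := by
    intro a b ha hb hab heq
    rcases Nat.eq_zero_or_pos a with rfl | hapos
    · have hsv : s l[0] = v := hl.1.src' (by omega)
      exact hl.2 b hb (by omega) (heq ▸ hsv)
    · set p : List E := l.take a ++ l.drop b with hp
      have hplen : p.length = a + (l.length - b) := by
        simp [hp]; omega
      have hget : ∀ j (h : j < p.length), p[j] = if h' : j < a then l[j]'(by omega)
          else l[b + (j - a)]'(by omega) := by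
        intro j h
        simp only [hp]
        rw [List.getElem_append]
        split
        · next h' =>
          rw [dif_pos (by simp at h' ⊢; omega)]
          exact List.getElem_take
        · next h' =>
          rw [dif_neg (by simp at h' ⊢; omega)]
          rw [List.getElem_drop]
          exact gE (by simp only [List.length_take]; omega)
      have hchain : ∀ j (h : j + 1 < p.length), r p[j] = s p[j + 1] := by
        intro j h
        have hstep := isGraphPath_iff.mp hl.1.path
        rw [hget j (by omega), hget (j + 1) (by omega)]
        rcases lt_trichotomy (j + 1) a with h1 | h1 | h1
        · rw [dif_pos (by omega), dif_pos (by omega)]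
          exact hstep j (by omega)
        · rw [dif_pos (by omega), dif_neg (by omega)]
          have : r (l[j]'(by omega)) = s (l[a]'(by omega)) := by
            have := hstep j (by omega)
            convert this using 3 <;> omega
          rw [this, heq]
          exact congrArg s (gE (by omega))
        · rw [dif_neg (by omega), dif_neg (by omega)]
          have := hstep (b + (j - a)) (by omega)
          convert this using 3
          omega
      have hpcsp : IsClosedSimplePath s r v p := by
        refine ⟨IsClosedPath.mk' (by omega) hchain ?_ ?_, ?_⟩
        · rw [hget 0 (by omega), dif_pos (by omega)]
          exact hl.1.src' (by omega)
        · rw [hget (p.length - 1) (by omega), dif_neg (by omega)]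
          have := hl.1.rng' (by omega)
          convert this using 3
          omega
        · intro j hj hj0
          rw [hget j hj]
          split
          · exact hl.2 j (by omega) hj0
          · exact hl.2 (b + (j - a)) (by omega) (by omega)
      have := huniq p hpcsp
      have : p.length = l.length := by rw [this]
      omega
  intro a b ha hb heq
  rcases lt_trichotomy a b with h | h | h
  · exact absurd (key a b ha hb h heq) (by simp)
  · exact h
  · exact absurd (key b a hb ha h heq.symm) (by simp)

/-- Extraction of a closed simple prefix from a closed path. -/
lemma extract_prefix {p : List E} (hp : IsClosedPath s r v p) :
    ∃ k, 0 < k ∧ k ≤ p.length ∧ IsClosedSimplePath s r v (p.take k) ∧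
      ∀ h : k < p.length, s p[k] = v := by
  classical
  have h0 : 0 < p.length := List.length_pos_iff.mpr hp.ne
  have hstep := isGraphPath_iff.mp hp.path
  by_cases hex : ∃ j, 0 < j ∧ ∃ hj : j < p.length, s p[j] = v
  · set k := Nat.find hex with hk
    obtain ⟨hk0, hklt, hkv⟩ := Nat.find_spec hex
    have hmin : ∀ j, 0 < j → j < k → ∀ hj : j < p.length, s p[j] ≠ v := by
      intro j hj0 hjk hj hjv
      exact Nat.find_min hex hjk ⟨hj0, hj, hjv⟩
    refine ⟨k, hk0, by omega, ⟨?_, ?_⟩, fun _ => hkv⟩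
    · have hlen : (p.take k).length = k := by simp; omega
      refine IsClosedPath.mk' (by omega) ?_ ?_ ?_
      · intro j hj
        rw [List.getElem_take, List.getElem_take]
        exact hstep j (by omega)
      · rw [List.getElem_take]
        exact hp.src' h0
      · rw [List.getElem_take]
        have h2 : r (p[k - 1]'(by omega)) = s (p[k]'hklt) := by
          have := hstep (k - 1) (by omega)
          convert this using 3 <;> omega
        exact (congrArg r (gE (by simp only [List.length_take]; omega))).trans
          (h2.trans hkv)
    · intro j hj hj0
      rw [List.getElem_take]
      exact hmin j hj0 (by simp at hj; omega) _
  · push_neg at hex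
    refine ⟨p.length, h0, le_refl _, ?_, fun h => absurd h (by omega)⟩
    rw [List.take_length]
    exact ⟨hp, fun j hj hj0 => hex j hj0 hj⟩

/-- Every closed path at `v` is a power of `l`. -/
lemma closed_pow (hl : IsClosedSimplePath s r v l)
    (huniq : ∀ m : List E, IsClosedSimplePath s r v m → m = l) :
    ∀ N (p : List E), p.length ≤ N → IsClosedPath s r v p →
      l.length ∣ p.length ∧ ∀ j (h : j < p.length), p[j] = l[j % l.length]'
        (Nat.mod_lt _ (List.length_pos_iff.mpr hl.1.ne)) := by
  have hn0 : 0 < l.length := List.length_pos_iff.mpr hl.1.ne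
  intro N
  induction N with
  | zero =>
    intro p hp hpcp2
    have : 0 < p.length := List.length_pos_iff.mpr hpcp2.ne
    omega
  | succ N ih =>
    intro p hp hpcp2
    have hp0 : 0 < p.length := List.length_pos_iff.mpr hpcp2.ne
    obtain ⟨k, hk0, hkle, hpcsp, hkv⟩ := extract_prefix hpcp2
    have hkl := huniq _ hpcsp
    have hkn : k = l.length := by
      have := congrArg List.length hkl
      simp at this
      omega
    have htake : ∀ j (hj : j < l.length), p[j]'(by omega) = l[j] := by
      intro j hj
      have h1 : (p.take k)[j]'(by simp; omega) = l[j]'(by omega) :=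
        (List.getElem_of_eq hkl (by simp; omega)).trans (gE rfl)
      rwa [List.getElem_take] at h1
    rcases eq_or_lt_of_le hkle with heq | hlt
    · refine ⟨by rw [← heq, hkn], ?_⟩
      intro j hj
      rw [htake j (by omega)]
      congr 1
      rw [Nat.mod_eq_of_lt (by omega)]
    · -- tail is again a closed path
      set p' := p.drop l.length with hp'
      have hp'len : p'.length = p.length - l.length := by simp [hp']
      have hget' : ∀ j (h : j < p'.length), p'[j] = p[l.length + j]'(by omega) := by
        intro j h
        simp only [hp']
        rw [List.getElem_drop]
      have hstep := isGraphPath_iff.mp hpcp2.path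
      have hpcp2' : IsClosedPath s r v p' := by
        refine IsClosedPath.mk' (by omega) ?_ ?_ ?_
        · intro j hj
          rw [hget' j (by omega), hget' (j+1) (by omega)]
          exact hstep (l.length + j) (by omega)
        · rw [hget' 0 (by omega)]
          exact (congrArg s (gE (by omega : l.length + 0 = k))).trans (hkv hlt)
        · rw [hget' (p'.length - 1) (by omega)]
          have := hpcp2.rng' hp0
          convert this using 3
          omega
      obtain ⟨hdvd, hval⟩ := ih p' (by omega) hpcp2'
      constructor
      · have : p.length = p'.length + l.length := by omega
        rw [this]
        exact Nat.dvd_add hdvd (dvd_refl _)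
      · intro j hj
        rcases lt_or_ge j l.length with hjn | hjn
        · rw [htake j hjn]
          congr 1
          rw [Nat.mod_eq_of_lt hjn]
        · have h1 : p[j] = p'[j - l.length]'(by omega) := by
            rw [hget']
            congr 1
            omega
          rw [h1, hval (j - l.length) (by omega)]
          congr 1
          rw [Nat.mod_eq_sub_mod hjn]

end Aux

/-- If `l = e₁⋯eₙ` is the unique closed simple path based at `v`,
then for each `i` the rotation `e_{i+1}⋯eₙe₁⋯e_i` (here `l.drop i ++ l.take i`,
indexing from `0`) is a cycle, and it is the unique closed simple path based at
its base vertex `s e_{i+1}`. -/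
theorem rotation_of_unique_closed_simple_path
    {V E : Type*} (s r : E → V) (v : V) (l : List E)
    (hl : IsClosedSimplePath s r v l)
    (huniq : ∀ m : List E, IsClosedSimplePath s r v m → m = l) :
    ∀ i (hi : i < l.length),
      IsCycle s r (s l[i]) (l.drop i ++ l.take i) ∧
      ∀ m : List E, IsClosedSimplePath s r (s l[i]) m → m = l.drop i ++ l.take i := by
  intro i hi
  have hn0 : 0 < l.length := by omega
  set n := l.length with hn
  have hinj := srcInj hl huniq
  have hstep := isGraphPath_iff.mp hl.1.path
  -- circular step lemma
  have hstep' : ∀ k (hk : k < n), r l[k] = s (l[(k+1) % n]'(Nat.mod_lt _ hn0)) := by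
    intro k hk
    rcases eq_or_lt_of_le (Nat.succ_le_of_lt hk) with heq | hlt
    · have heq' : k + 1 = n := by omega
      have h1 : (k + 1) % n = 0 := by rw [heq']; simp
      have h2 : k = n - 1 := by omega
      have := hl.1.rng' hn0
      rw [show s (l[(k+1) % n]'(Nat.mod_lt _ hn0)) = s (l[0]'hn0) from congrArg s (gE h1)]
      rw [hl.1.src' hn0]
      subst h2
      exact this
    · have h1 : (k + 1) % n = k + 1 := Nat.mod_eq_of_lt hlt
      rw [show s (l[(k+1) % n]'(Nat.mod_lt _ hn0)) = s (l[k+1]'hlt) from congrArg s (gE h1)]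
      exact hstep k hlt
  set ρ := l.drop i ++ l.take i with hρ
  have hρlen : ρ.length = n := by simp [hρ]; omega
  have hρget : ∀ j (h : j < n), ρ[j]'(by omega) = l[(i + j) % n]'(Nat.mod_lt _ hn0) := by
    intro j h
    simp only [hρ]
    rw [List.getElem_append]
    split
    · next h' =>
      rw [List.getElem_drop]
      refine gE ?_
      simp only [List.length_drop] at h'
      rw [Nat.mod_eq_of_lt (by omega)]
    · next h' =>
      rw [List.getElem_take]
      refine gE ?_
      simp only [List.length_drop] at h' ⊢
      rw [Nat.mod_eq_sub_mod (by omega), Nat.mod_eq_of_lt (by omega)]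
      omega
  have hw : s (l[i]'hi) = s (ρ[0]'(by omega)) := by
    rw [hρget 0 (by omega)]
    exact congrArg s (gE (by simp [Nat.mod_eq_of_lt hi]))
  -- ρ is a closed path at w
  have hρcp : IsClosedPath s r (s l[i]) ρ := by
    refine IsClosedPath.mk' (by omega) ?_ ?_ ?_
    · intro j hj
      rw [hρget j (by omega), hρget (j+1) (by omega)]
      rw [hstep' ((i + j) % n) (Nat.mod_lt _ hn0)]
      refine congrArg s (gE ?_)
      calc ((i + j) % n + 1) % n = (i + j + 1) % n :=
            Nat.ModEq.add_right 1 (Nat.mod_modEq (i + j) n)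
        _ = (i + (j + 1)) % n := by rw [Nat.add_assoc]
    · exact hw.symm
    · have h1 : r (ρ[ρ.length - 1]'(by omega)) = r (ρ[n - 1]'(by omega)) :=
        congrArg r (gE (by omega))
      rw [h1, hρget (n - 1) (by omega), hstep' ((i + (n - 1)) % n) (Nat.mod_lt _ hn0)]
      refine congrArg s (gE ?_)
      calc ((i + (n - 1)) % n + 1) % n = (i + (n - 1) + 1) % n :=
            Nat.ModEq.add_right 1 (Nat.mod_modEq _ n)
        _ = (i + n) % n := by rw [show i + (n - 1) + 1 = i + n by omega]
        _ = i := by rw [Nat.add_mod_right, Nat.mod_eq_of_lt hi]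
  have hmod_inj : ∀ a b, a < n → b < n →
      s (l[(i + a) % n]'(Nat.mod_lt _ hn0)) = s (l[(i + b) % n]'(Nat.mod_lt _ hn0)) → a = b := by
    intro a b ha hb heq
    have := hinj _ _ (Nat.mod_lt _ hn0) (Nat.mod_lt _ hn0) heq
    have h2 : (i + a) % n = (i + b) % n := this
    have := Nat.ModEq.add_left_cancel' i h2
    unfold Nat.ModEq at this
    rw [Nat.mod_eq_of_lt ha, Nat.mod_eq_of_lt hb] at this
    exact this
  have hρcsp : IsClosedSimplePath s r (s l[i]) ρ := by
    refine ⟨hρcp, ?_⟩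
    intro j hj hj0 hjv
    rw [hρget j (by omega)] at hjv
    have : s (l[(i + 0) % n]'(Nat.mod_lt _ hn0)) = s l[i] :=
      congrArg s (gE (by simp [Nat.mod_eq_of_lt hi]))
    have := hmod_inj j 0 (by omega) (by omega) (by rw [hjv, this])
    omega
  have hρcyc : IsCycle s r (s l[i]) ρ := by
    refine ⟨hρcsp, ?_⟩
    intro a b ha hb heq
    rw [hρget a (by omega), hρget b (by omega)] at heq
    exact hmod_inj a b (by omega) (by omega) heq
  refine ⟨hρcyc, ?_⟩
  -- uniqueness
  intro m hm
  rcases Nat.eq_zero_or_pos i with rfl | hi0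
  · have hv : s (l[0]'hi) = v := hl.1.src' hn0
    rw [hv] at hm
    have := huniq m hm
    rw [this, hρ]
    simp
  · -- i ≥ 1 : splice m into l
    have hm0 : 0 < m.length := List.length_pos_iff.mpr hm.1.ne
    set p : List E := l.take i ++ (m ++ l.drop i) with hp
    have hplen : p.length = n + m.length := by simp [hp]; omega
    have hpget : ∀ j (h : j < p.length),
        p[j] = if h1 : j < i then l[j]'(by omega)
          else if h2 : j < i + m.length then m[j - i]'(by omega)
          else l[j - m.length]'(by omega) := by
      intro j h
      simp only [hp]
      rw [List.getElem_append]
      split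
      · next h' =>
        rw [dif_pos (by simp at h'; omega)]
        exact List.getElem_take
      · next h' =>
        simp only [List.length_take] at h'
        rw [List.getElem_append]
        split
        · next h'' =>
          rw [dif_neg (by omega), dif_pos (by simp only [List.length_take] at h'' ⊢; omega)]
          exact gE (by simp only [List.length_take]; omega)
        · next h'' =>
          simp only [List.length_take] at h''
          rw [dif_neg (by omega), dif_neg (by omega), List.getElem_drop]
          exact gE (by simp only [List.length_take]; omega)
    have hmstep := isGraphPath_iff.mp hm.1.path
    have hmw : s (m[0]'hm0) = s l[i] := hm.1.src' hm0
    have hmw' : r (m[m.length - 1]'(by omega)) = s l[i] := hm.1.rng' hm0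
    have hpcp : IsClosedPath s r v p := by
      refine IsClosedPath.mk' (by omega) ?_ ?_ ?_
      · intro j hj
        rw [hpget j (by omega), hpget (j+1) (by omega)]
        rcases lt_trichotomy (j + 1) i with h1 | h1 | h1
        · rw [dif_pos (by omega), dif_pos (by omega)]
          exact hstep j (by omega)
        · rw [dif_pos (by omega), dif_neg (by omega), dif_pos (by omega)]
          have hs : r (l[j]'(by omega)) = s (l[i]'hi) := by
            rw [hstep j (by omega)]
            exact congrArg s (gE (by omega))
          rw [hs, ← hmw]
          exact congrArg s (gE (by omega))
        · rw [dif_neg (by omega)]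
          rcases lt_trichotomy (j + 1) (i + m.length) with h2 | h2 | h2
          · rw [dif_pos (by omega), dif_neg (by omega), dif_pos (by omega)]
            rw [hmstep (j - i) (by omega)]
            exact congrArg s (gE (by omega))
          · rw [dif_pos (by omega), dif_neg (by omega), dif_neg (by omega)]
            have hs : r (m[j - i]'(by omega)) = s (l[i]'hi) :=
              (congrArg r (gE (by omega : j - i = m.length - 1))).trans hmw'
            rw [hs]
            exact congrArg s (gE (by omega))
          · rw [dif_neg (by omega), dif_neg (by omega), dif_neg (by omega)]
            rw [hstep (j - m.length) (by omega)]
            exact congrArg s (gE (by omega))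
      · rw [hpget 0 (by omega), dif_pos (by omega)]
        exact hl.1.src' hn0
      · rw [hpget (p.length - 1) (by omega), dif_neg (by omega), dif_neg (by omega)]
        exact (congrArg r (gE (by omega : p.length - 1 - m.length = l.length - 1))).trans
          (hl.1.rng' hn0)
    obtain ⟨hdvd, hval⟩ := closed_pow hl huniq p.length p (le_refl _) hpcp
    have hmdvd : n ∣ m.length := by
      rw [hplen] at hdvd
      exact (Nat.dvd_add_right (dvd_refl n)).mp hdvd
    have hmlen : m.length = n := by
      rcases hmdvd with ⟨k, hk⟩
      rcases Nat.lt_or_ge m.length (n + n) with hlt | hge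
      · have hk2 : k < 2 := by
          by_contra hk2
          push_neg at hk2
          have : n * 2 ≤ n * k := Nat.mul_le_mul_left n hk2
          omega
        interval_cases k <;> omega
      · -- m.length ≥ 2n: contradiction with simplicity of m at index n
        exfalso
        have h1 : p[i + n]'(by omega) = m[n]'(by omega) := by
          rw [hpget (i + n) (by omega), dif_neg (by omega), dif_pos (by omega)]
          exact gE (by omega)
        have h2 : p[i + n]'(by omega) = l[(i + n) % n]'(Nat.mod_lt _ hn0) := hval _ (by omega)
        have h3 : (i + n) % n = i := by rw [Nat.add_mod_right, Nat.mod_eq_of_lt hi]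
        have h4 : s (m[n]'(by omega)) = s (l[i]'hi) := by
          rw [← h1, h2]
          exact congrArg s (gE h3)
        exact hm.2 n (by omega) (by omega) h4
    apply List.ext_getElem (by omega)
    intro j h1 h2
    have e1 : p[i + j]'(by omega) = m[j]'(by omega) := by
      rw [hpget (i + j) (by omega), dif_neg (by omega), dif_pos (by omega)]
      exact gE (by omega)
    have e2 : p[i + j]'(by omega) = l[(i + j) % n]'(Nat.mod_lt _ hn0) := hval _ (by omega)
    rw [← e1, e2, hρget j (by omega)]
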